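/- Let m be a continuous topological partial action of a Polish group G on a Polish space X with G*X a G_δ subset of G × X, and let V ⊆ G be a nonempty open set. If A ⊆ X is Borel, then both Vaught transforms A^{△V} and A^{*V} are Borel subsets of X. -/

import Mathlib

structure PartialAction (G : Type*) (X : Type*) [Group G] where
  dom : G → Set X
  act : G → X → X
  mem_dom_one : ∀ x, x ∈ dom 1
  act_one : ∀ x, act 1 x = x
  mem_dom_inv : ∀ g x, x ∈ dom g → act g x ∈ dom g⁻¹
  act_inv_act : ∀ g x, x ∈ dom g → act g⁻¹ (act g x) = x
  mem_dom_mul : ∀ g h x, x ∈ dom h → act h x ∈ dom g → x ∈ dom (g * h)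
  act_mul : ∀ g h x, x ∈ dom h → act h x ∈ dom g → act (g * h) x = act g (act h x)

namespace PartialAction

variable {G X : Type*} [Group G]

/-- The orbit equivalence relation `E^p_G` of a partial action. -/
def orbitRel (pa : PartialAction G X) (x y : X) : Prop :=
  ∃ g, x ∈ pa.dom g ∧ pa.act g x = y

/-- `G^x = {g : G | g · x is defined}`. -/
def stabDom (pa : PartialAction G X) (x : X) : Set G := {g | x ∈ pa.dom g}

/-- The orbit equivalence relation of the partial action `\widehat m` on `G × X`,
`\widehat m_u (h, x) = (h u⁻¹, u · x)`. -/
def hatOrbitRel (pa : PartialAction G X) (p q : G × X) : Prop :=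
  ∃ u, p.2 ∈ pa.dom u ∧ q = (p.1 * u⁻¹, pa.act u p.2)

/-- Vaught transform `A^{△V}`. -/
def vaughtDelta [TopologicalSpace G] (pa : PartialAction G X) (A : Set X) (V : Set G) : Set X :=
  {x | ¬ IsMeagre {g : ↥(V ∩ pa.stabDom x) | pa.act (g : G) x ∈ A}}

/-- Vaught transform `A^{*V}`. -/
def vaughtStar [TopologicalSpace G] (pa : PartialAction G X) (A : Set X) (V : Set G) : Set X :=
  {x | {g : ↥(V ∩ pa.stabDom x) | pa.act (g : G) x ∈ A} ∈ residual ↥(V ∩ pa.stabDom x)}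

end PartialAction

open Set Topology Filter TopologicalSpace

section GeneralAux

variable {α β : Type*} [TopologicalSpace α] [TopologicalSpace β]

lemma aux_isGδ_preimage {s : Set β} (h : IsGδ s) {f : α → β} (hf : Continuous f) :
    IsGδ (f ⁻¹' s) := by
  obtain ⟨T, hTo, hTc, rfl⟩ := h
  rw [preimage_sInter]
  exact IsGδ.biInter hTc fun t ht => ((hTo t ht).preimage hf).isGδ

lemma aux_dense_iff {s V : Set α} :
    Dense ((Subtype.val : ↥s → α) ⁻¹' V) ↔ s ⊆ closure (s ∩ V) := by
  constructor
  · intro h y hy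
    have := h ⟨y, hy⟩
    rwa [closure_subtype, Subtype.image_preimage_coe] at this
  · intro h y
    rw [closure_subtype, Subtype.image_preimage_coe]
    exact h y.2

lemma aux_baireSpace_of_iInter [PolishSpace α] {U : ℕ → Set α} (hUo : ∀ n, IsOpen (U n)) :
    BaireSpace ↥(⋂ n, U n) := by
  letI := upgradeIsCompletelyMetrizable α
  set s : Set α := ⋂ n, U n with hs
  haveI : CompleteSpace ↥(closure s) := isClosed_closure.completeSpace_coe
  constructor
  intro f ho hd
  choose V hVo hfV using fun n => isOpen_induced_iff.1 (ho n)
  have hdV : ∀ n, closure s ⊆ closure (closure s ∩ V n) := by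
    intro n
    have h1 : s ⊆ closure (s ∩ V n) := aux_dense_iff.1 (by rw [hfV]; exact hd n)
    have h2 : closure (s ∩ V n) ⊆ closure (closure s ∩ V n) :=
      closure_mono (inter_subset_inter_left _ subset_closure)
    exact closure_minimal (h1.trans h2) isClosed_closure
  have hdU : ∀ n, closure s ⊆ closure (closure s ∩ U n) := by
    intro n
    have h1 : s ⊆ closure s ∩ U n := fun y hy =>
      ⟨subset_closure hy, mem_iInter.1 (hs ▸ hy) n⟩
    exact closure_minimal (h1.trans subset_closure) isClosed_closure
  set F : ℕ ⊕ ℕ → Set ↥(closure s) :=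
    Sum.elim (fun n => Subtype.val ⁻¹' V n) (fun n => Subtype.val ⁻¹' U n) with hF
  have hFo : ∀ i, IsOpen (F i) := by
    rintro (n | n)
    · exact (hVo n).preimage continuous_subtype_val
    · exact (hUo n).preimage continuous_subtype_val
  have hFd : ∀ i, Dense (F i) := by
    rintro (n | n)
    · exact aux_dense_iff.2 (hdV n)
    · exact aux_dense_iff.2 (hdU n)
  have hDense := dense_iInter_of_isOpen hFo hFd
  have hiF : ⋂ i, F i = (Subtype.val : ↥(closure s) → α) ⁻¹' ((⋂ n, V n) ∩ s) := by
    ext z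
    simp only [hF, mem_iInter, Sum.forall, Sum.elim_inl, Sum.elim_inr, mem_preimage,
      mem_inter_iff, hs]
  rw [hiF] at hDense
  have hC : closure s ⊆ closure (closure s ∩ ((⋂ n, V n) ∩ s)) := aux_dense_iff.1 hDense
  have hfeq : (⋂ n, f n) = (Subtype.val : ↥s → α) ⁻¹' (⋂ n, V n) := by
    rw [preimage_iInter]
    exact (iInter_congr fun n => (hfV n)).symm
  rw [hfeq]
  apply aux_dense_iff.2
  intro y hy
  have h1 : closure s ∩ ((⋂ n, V n) ∩ s) ⊆ s ∩ ⋂ n, V n := fun z hz => ⟨hz.2.2, hz.2.1⟩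
  exact closure_mono h1 (hC (subset_closure hy))

lemma aux_baireSpace_of_isGδ [PolishSpace α] {s : Set α} (hs : IsGδ s) :
    BaireSpace ↥s := by
  obtain ⟨T, hTo, hTc, rfl⟩ := hs
  obtain ⟨Ufun, hU⟩ := (hTc.insert univ).exists_eq_range (insert_nonempty _ _)
  have hUo : ∀ n, IsOpen (Ufun n) := by
    intro n
    have hn : Ufun n ∈ insert univ T := hU ▸ mem_range_self n
    rcases hn with h | h
    · rw [h]; exact isOpen_univ
    · exact hTo _ h
  have hsU : ⋂₀ T = ⋂ n, Ufun n := by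
    rw [← sInter_range, ← hU, sInter_insert, univ_inter]
  exact hsU ▸ aux_baireSpace_of_iInter hUo

lemma aux_isOpenMap_inclusion {s t : Set α} (h : s ⊆ t) {U : Set α} (hU : IsOpen U)
    (hs : s = U ∩ t) : IsOpenMap (inclusion h) := by
  intro o ho
  obtain ⟨W, hW, rfl⟩ := isOpen_induced_iff.1 ho
  refine isOpen_induced_iff.2 ⟨W ∩ U, hW.inter hU, ?_⟩
  ext ⟨g, hg⟩
  simp only [mem_preimage, mem_inter_iff, mem_image]
  constructor
  · rintro ⟨hgW, hgU⟩
    exact ⟨⟨g, hs ▸ ⟨hgU, hg⟩⟩, hgW, rfl⟩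
  · rintro ⟨⟨z, hz⟩, hzW, hzeq⟩
    have hzg : z = g := congrArg Subtype.val hzeq
    subst hzg
    exact ⟨hzW, (hs ▸ hz : z ∈ U ∩ t).1⟩

end GeneralAux

namespace PartialAction

section VaughtAux

variable {G X : Type*} [Group G] [TopologicalSpace G] [TopologicalSpace X]
variable (pa : PartialAction G X)

lemma aux_continuous_eval
    (hcont : ContinuousOn (fun p : G × X => pa.act p.1 p.2) {p : G × X | p.2 ∈ pa.dom p.1})
    (x : X) {W : Set G} (hW : ∀ g ∈ W, x ∈ pa.dom g) :
    Continuous fun g : ↥W => pa.act (g : G) x :=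
  hcont.comp_continuous (continuous_subtype_val.prodMk continuous_const) fun g => hW _ g.2

lemma aux_isGδ_bar (hGδ : IsGδ {p : G × X | p.2 ∈ pa.dom p.1}) {V : Set G} (hV : IsOpen V)
    (x : X) : IsGδ (V ∩ pa.stabDom x) :=
  hV.isGδ.inter (aux_isGδ_preimage hGδ (continuous_id.prodMk continuous_const))

lemma aux_vaughtStar_eq (A : Set X) (V : Set G) :
    pa.vaughtStar A V = (pa.vaughtDelta Aᶜ V)ᶜ := by
  ext x
  simp only [vaughtStar, vaughtDelta, Set.mem_setOf_eq, Set.mem_compl_iff, not_not, IsMeagre,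
    Set.compl_setOf, not_not]

lemma aux_vaughtDelta_iUnion (f : ℕ → Set X) (V : Set G) :
    pa.vaughtDelta (⋃ n, f n) V = ⋃ n, pa.vaughtDelta (f n) V := by
  ext x
  simp only [vaughtDelta, Set.mem_iUnion, Set.mem_setOf_eq]
  constructor
  · intro h
    by_contra hc
    push_neg at hc
    apply h
    have heq : {g : ↥(V ∩ pa.stabDom x) | ∃ i, pa.act (g : G) x ∈ f i}
        = ⋃ n, {g : ↥(V ∩ pa.stabDom x) | pa.act (g : G) x ∈ f n} := by
      ext g
      simp only [Set.mem_setOf_eq, Set.mem_iUnion]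
    rw [heq]
    exact isMeagre_iUnion hc
  · rintro ⟨n, hn⟩ h
    exact hn (h.mono (t := {g : ↥(V ∩ pa.stabDom x) | pa.act (g : G) x ∈ f n}) fun g (hg : pa.act (g : G) x ∈ f n) => (⟨n, hg⟩ : ∃ i, pa.act (g : G) x ∈ f i))

lemma aux_vaughtDelta_isOpen
    (hdom : ∀ g, IsOpen (pa.dom g))
    (hcont : ContinuousOn (fun p : G × X => pa.act p.1 p.2) {p : G × X | p.2 ∈ pa.dom p.1})
    (hGδ : IsGδ {p : G × X | p.2 ∈ pa.dom p.1})
    [PolishSpace G]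
    {A : Set X} (hA : IsOpen A) {V : Set G} (hV : IsOpen V) :
    IsOpen (pa.vaughtDelta A V) := by
  have heq : pa.vaughtDelta A V = ⋃ g ∈ V, {x | x ∈ pa.dom g ∧ pa.act g x ∈ A} := by
    ext x
    simp only [vaughtDelta, Set.mem_setOf_eq, Set.mem_iUnion, exists_prop]
    haveI := aux_baireSpace_of_isGδ (pa.aux_isGδ_bar hGδ hV x)
    constructor
    · intro h
      by_contra hc
      push_neg at hc
      apply h
      have hempty : {g : ↥(V ∩ pa.stabDom x) | pa.act (g : G) x ∈ A} = ∅ := by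
        ext g
        simp only [Set.mem_setOf_eq, Set.mem_empty_iff_false, iff_false]
        exact fun hg => hc (g : G) g.2.1 g.2.2 hg
      rw [hempty]
      exact IsMeagre.empty
    · rintro ⟨g₀, hg₀V, hg₀d, hg₀A⟩ hmeag
      set S := {g : ↥(V ∩ pa.stabDom x) | pa.act (g : G) x ∈ A} with hS
      have hSopen : IsOpen S := hA.preimage (pa.aux_continuous_eval hcont x fun g hg => hg.2)
      have hSne : S.Nonempty := ⟨⟨g₀, hg₀V, hg₀d⟩, hg₀A⟩
      have hdense : Dense Sᶜ := dense_of_mem_residual hmeag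
      obtain ⟨z, hz1, hz2⟩ := hdense.inter_open_nonempty S hSopen hSne
      exact hz2 hz1
  rw [heq]
  refine isOpen_biUnion fun g _ => ?_
  have hcg : ContinuousOn (fun y => pa.act g y) (pa.dom g) :=
    hcont.comp (continuous_const.prodMk continuous_id).continuousOn fun y hy => hy
  exact hcg.isOpen_inter_preimage (hdom g) hA

lemma aux_vaughtDelta_eq
    (hcont : ContinuousOn (fun p : G × X => pa.act p.1 p.2) {p : G × X | p.2 ∈ pa.dom p.1})
    (hGδ : IsGδ {p : G × X | p.2 ∈ pa.dom p.1})
    [PolishSpace G] [MeasurableSpace X] [BorelSpace X]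
    {A : Set X} (hA : MeasurableSet A) {V : Set G} (hV : IsOpen V)
    {B : Set (Set G)} (hB : IsTopologicalBasis B) :
    pa.vaughtDelta A V
      = ⋃ U ∈ {U ∈ B | U ⊆ V}, ((⋃ g ∈ U, pa.dom g) ∩ pa.vaughtStar A U) := by
  ext x
  simp only [Set.mem_iUnion, exists_prop, Set.mem_inter_iff, Set.mem_sep_iff]
  constructor
  · intro h
    rw [vaughtDelta, Set.mem_setOf_eq] at h
    set Y := ↥(V ∩ pa.stabDom x) with hY
    set S : Set Y := {g | pa.act (g : G) x ∈ A} with hS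
    letI : MeasurableSpace Y := borel Y
    haveI : BorelSpace Y := ⟨rfl⟩
    have hmeas : MeasurableSet S :=
      (pa.aux_continuous_eval hcont x fun g hg => hg.2).measurable hA
    obtain ⟨O, hOopen, hSO⟩ := hmeas.baireMeasurableSet.residualEq_isOpen
    have hbad : IsMeagre {y : Y | ¬ (y ∈ S ↔ y ∈ O)} := by
      have hres := Filter.eventuallyEq_set.1 hSO
      rw [IsMeagre, Set.compl_setOf]
      simp only [not_not]; exact hres
    obtain ⟨y, hyO⟩ : O.Nonempty := by
      rcases O.eq_empty_or_nonempty with hO | hO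
      · exfalso
        apply h
        apply hbad.mono
        intro g hg
        simp only [Set.mem_setOf_eq]
        intro hiff
        rw [hO] at hiff
        exact hiff.1 hg
      · exact hO
    obtain ⟨W, hWopen, hOW⟩ := isOpen_induced_iff.1 hOopen
    have hyW : (y : G) ∈ W := by rw [← hOW] at hyO; exact hyO
    obtain ⟨U, hUB, hyU, hUsub⟩ :=
      hB.exists_subset_of_mem_open (Set.mem_inter hyW y.2.1) (hWopen.inter hV)
    have hUV : U ⊆ V := hUsub.trans Set.inter_subset_right
    refine ⟨U, ⟨hUB, hUV⟩, ?_, ?_⟩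
    · exact ⟨(y : G), hyU, y.2.2⟩
    · -- x ∈ pa.vaughtStar A U
      have hsub : U ∩ pa.stabDom x ⊆ V ∩ pa.stabDom x :=
        Set.inter_subset_inter_left _ hUV
      set e : ↥(U ∩ pa.stabDom x) → Y := Set.inclusion hsub with he
      have hOM : IsOpenMap e := by
        apply aux_isOpenMap_inclusion hsub (hB.isOpen hUB)
        ext g
        exact ⟨fun hg => ⟨hg.1, hUV hg.1, hg.2⟩, fun hg => ⟨hg.1, hg.2.2⟩⟩
      have hpre : IsMeagre (e ⁻¹' {y : Y | ¬ (y ∈ S ↔ y ∈ O)}) :=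
        hbad.preimage_of_isOpenMap (continuous_inclusion hsub) hOM
      show {g : ↥(U ∩ pa.stabDom x) | pa.act (g : G) x ∈ A} ∈ residual _
      have hcompl : IsMeagre {g : ↥(U ∩ pa.stabDom x) | pa.act (g : G) x ∈ A}ᶜ := by
        apply hpre.mono
        intro g hg
        simp only [Set.mem_compl_iff, Set.mem_setOf_eq] at hg
        simp only [Set.mem_preimage, Set.mem_setOf_eq]
        intro hiff
        have hgO : e g ∈ O := by
          rw [← hOW]
          exact (hUsub g.2.1).1
        exact hg (hiff.2 hgO)
      have := hcompl
      rw [IsMeagre, compl_compl] at this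
      exact this
  · rintro ⟨U, ⟨hUB, hUV⟩, hxD, hxStar⟩
    rw [vaughtDelta, Set.mem_setOf_eq]
    intro hmeag
    have hxStar' : {g : ↥(U ∩ pa.stabDom x) | pa.act (g : G) x ∈ A}
        ∈ residual ↥(U ∩ pa.stabDom x) := hxStar
    obtain ⟨g₀, hg₀U, hg₀⟩ : ∃ g ∈ U, x ∈ pa.dom g := hxD
    haveI : Nonempty ↥(U ∩ pa.stabDom x) := ⟨⟨g₀, hg₀U, hg₀⟩⟩
    haveI := aux_baireSpace_of_isGδ (pa.aux_isGδ_bar hGδ (hB.isOpen hUB) x)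
    have hsub : U ∩ pa.stabDom x ⊆ V ∩ pa.stabDom x :=
      Set.inter_subset_inter_left _ hUV
    set e : ↥(U ∩ pa.stabDom x) → ↥(V ∩ pa.stabDom x) := Set.inclusion hsub with he
    have hOM : IsOpenMap e := by
      apply aux_isOpenMap_inclusion hsub (hB.isOpen hUB)
      ext g
      exact ⟨fun hg => ⟨hg.1, hUV hg.1, hg.2⟩, fun hg => ⟨hg.1, hg.2.2⟩⟩
    have h1 : IsMeagre (e ⁻¹' {g : ↥(V ∩ pa.stabDom x) | pa.act (g : G) x ∈ A}) :=
      hmeag.preimage_of_isOpenMap (continuous_inclusion hsub) hOM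
    have hee : e ⁻¹' {g : ↥(V ∩ pa.stabDom x) | pa.act (g : G) x ∈ A}
        = {g : ↥(U ∩ pa.stabDom x) | pa.act (g : G) x ∈ A} := rfl
    rw [hee] at h1
    rw [IsMeagre] at h1
    have hempty := Filter.inter_mem hxStar' h1
    rw [Set.inter_compl_self] at hempty
    obtain ⟨z, hz⟩ := (dense_of_mem_residual hempty).nonempty
    exact hz

end VaughtAux

end PartialAction


/-- for a continuous partial action of a Polish group on a Polish space
with `G*X` a `G_δ` set, Vaught transforms of Borel sets are Borel. -/
theorem vaught_borel {G X : Type*} [Group G] [TopologicalSpace G] [IsTopologicalGroup G]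
    [PolishSpace G] [TopologicalSpace X] [PolishSpace X]
    [MeasurableSpace X] [BorelSpace X]
    (pa : PartialAction G X)
    (hdom : ∀ g, IsOpen (pa.dom g))
    (hcont : ContinuousOn (fun p : G × X => pa.act p.1 p.2) {p : G × X | p.2 ∈ pa.dom p.1})
    (hGδ : IsGδ {p : G × X | p.2 ∈ pa.dom p.1})
    (V : Set G) (hV : V.Nonempty) (hVopen : IsOpen V)
    (A : Set X) (hA : MeasurableSet A) :
    MeasurableSet (pa.vaughtDelta A V) ∧ MeasurableSet (pa.vaughtStar A V) := by
  obtain ⟨B, hBc, -, hB⟩ := exists_countable_basis G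
  have key : ∀ A : Set X, MeasurableSet A →
      ∀ V : Set G, IsOpen V → MeasurableSet (pa.vaughtDelta A V) := by
    intro A hA
    refine MeasurableSet.induction_on_open
      (C := fun A _ => ∀ V : Set G, IsOpen V → MeasurableSet (pa.vaughtDelta A V))
      ?_ ?_ ?_ A hA
    · intro U hU W hW
      exact (pa.aux_vaughtDelta_isOpen hdom hcont hGδ hU hW).measurableSet
    · intro t ht IH W hW
      rw [pa.aux_vaughtDelta_eq hcont hGδ ht.compl hW hB]
      refine MeasurableSet.biUnion (hBc.mono (Set.sep_subset _ _)) fun U hU => ?_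
      refine MeasurableSet.inter ?_ ?_
      · exact (isOpen_biUnion fun g _ => hdom g).measurableSet
      · rw [pa.aux_vaughtStar_eq, compl_compl]
        exact (IH U (hB.isOpen hU.1)).compl
    · intro f _ _ IH W hW
      rw [pa.aux_vaughtDelta_iUnion]
      exact MeasurableSet.iUnion fun n => IH n W hW
  refine ⟨key A hA V hVopen, ?_⟩
  rw [pa.aux_vaughtStar_eq]
  exact (key Aᶜ hA.compl V hVopen).compl
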